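/- With w as in the explicit formula w(r) = η₀(r) + 2r²/(1+r²) - (1/2)η₀(r)² + ((1-r²)/(1+r²))∫₁^{1+r²} (log t)/(1-t) dt (η₀(r) = -log(1+r²)), one has lim_{r→∞} 2πr w'(r) = -4π; equivalently ∫_{ℝ²} Δw dx = -4π. -/

import Mathlib

open Real MeasureTheory Filter intervalIntegral

/-- primitive of log t / (1-t) from 1 -/
noncomputable def F0 (v : ℝ) : ℝ := ∫ t in (1:ℝ)..v, Real.log t / (1 - t)

lemma g0_abs_le {t : ℝ} (ht : 1 ≤ t) : |Real.log t / (1 - t)| ≤ 2 / Real.sqrt t := by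
  rcases eq_or_lt_of_le ht with h | h
  · rw [← h]
    simp
  · have h0 : (0:ℝ) < t := by linarith
    have hst : Real.sqrt t * Real.sqrt t = t := Real.mul_self_sqrt h0.le
    have hs1 : 1 ≤ Real.sqrt t := by
      nlinarith [Real.sqrt_nonneg t]
    have hlog : Real.log t ≤ 2 * (Real.sqrt t - 1) := by
      have := Real.log_le_sub_one_of_pos (show 0 < Real.sqrt t by positivity)
      have hls : Real.log (Real.sqrt t) = Real.log t / 2 := Real.log_sqrt h0.le
      linarith [this, hls.symm.le, hls.le]
    have hlognn : 0 ≤ Real.log t := Real.log_nonneg ht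
    have habs : |Real.log t / (1 - t)| = Real.log t / (t - 1) := by
      rw [abs_div, abs_of_nonneg hlognn, abs_of_neg (by linarith : 1 - t < 0)]
      ring_nf
    rw [habs]
    rw [div_le_div_iff₀ (by linarith) (by positivity)]
    nlinarith [hlog, hs1, hst]

lemma g0_abs_le' {t : ℝ} (ht : 1 ≤ t) : |Real.log t / (1 - t)| ≤ 2 := by
  refine (g0_abs_le ht).trans ?_
  have : 1 ≤ Real.sqrt t := by nlinarith [Real.sqrt_nonneg t, Real.mul_self_sqrt (by linarith : (0:ℝ) ≤ t)]
  rw [div_le_iff₀ (by linarith)]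
  nlinarith

lemma g0_meas : Measurable (fun t : ℝ => Real.log t / (1 - t)) :=
  Real.measurable_log.div (measurable_const.sub measurable_id)

lemma g0_intInt {a b : ℝ} (ha : 1 ≤ a) (hb : 1 ≤ b) :
    IntervalIntegrable (fun t : ℝ => Real.log t / (1 - t)) volume a b := by
  rw [intervalIntegrable_iff]
  apply Measure.integrableOn_of_bounded (M := 2) measure_Ioc_lt_top.ne
    g0_meas.aestronglyMeasurable
  filter_upwards [ae_restrict_mem measurableSet_uIoc] with t htm
  have h1 : 1 ≤ t := by
    rcases htm with ⟨h', _⟩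
    have : (1:ℝ) ≤ min a b := le_min ha hb
    linarith
  rw [Real.norm_eq_abs]
  exact g0_abs_le' h1

lemma F0_sub_le {a b : ℝ} (ha : 1 ≤ a) (hb : 1 ≤ b) : |F0 b - F0 a| ≤ 2 * |b - a| := by
  have h : F0 b - F0 a = ∫ t in a..b, Real.log t / (1 - t) :=
    intervalIntegral.integral_interval_sub_left (g0_intInt le_rfl hb) (g0_intInt le_rfl ha)
  rw [h, ← Real.norm_eq_abs]
  apply intervalIntegral.norm_integral_le_of_norm_le_const
  intro t htm
  rw [Set.mem_uIoc] at htm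
  have h1 : 1 ≤ t := by rcases htm with ⟨h', _⟩ | ⟨h', _⟩ <;> linarith
  rw [Real.norm_eq_abs]
  exact g0_abs_le' h1

lemma F0_one : F0 1 = 0 := intervalIntegral.integral_same

lemma F0_abs_le {s : ℝ} (hs : 1 ≤ s) : |F0 s| ≤ 4 * Real.sqrt s := by
  have hint : ∀ t ∈ Set.Icc (1:ℝ) s, HasDerivAt (fun t => 4 * Real.sqrt t) (2 / Real.sqrt t) t := by
    intro t ht
    have h0 : (0:ℝ) < t := by linarith [ht.1]
    have := (Real.hasDerivAt_sqrt h0.ne').const_mul 4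
    refine (this).congr_deriv (Eq.symm ?_)
    have hne : Real.sqrt t ≠ 0 := by positivity
    field_simp
    ring
  have hcont : ContinuousOn (fun t : ℝ => 2 / Real.sqrt t) (Set.Icc 1 s) := by
    apply ContinuousOn.div continuousOn_const (Real.continuous_sqrt.continuousOn)
    intro t ht
    have : (0:ℝ) < t := by linarith [ht.1]
    positivity
  have key : ∫ t in (1:ℝ)..s, 2 / Real.sqrt t = 4 * Real.sqrt s - 4 * Real.sqrt 1 :=
    intervalIntegral.integral_eq_sub_of_hasDerivAt
      (fun t ht => hint t (by rwa [Set.uIcc_of_le hs] at ht))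
      (hcont.intervalIntegrable_of_Icc hs)
  have hb : |F0 s| ≤ |∫ t in (1:ℝ)..s, 2 / Real.sqrt t| := by
    rw [← Real.norm_eq_abs]
    apply intervalIntegral.norm_integral_le_abs_of_norm_le (g := fun t => 2 / Real.sqrt t)
    · rw [Set.uIoc_of_le hs]
      filter_upwards [ae_restrict_mem measurableSet_Ioc] with t ht
      rw [Real.norm_eq_abs]
      exact g0_abs_le ht.1.le
    · exact (hcont.mono (by rw [Set.uIcc_of_le hs])).intervalIntegrable
  rw [key, abs_of_nonneg (by nlinarith [Real.sqrt_one, Real.one_le_sqrt.mpr hs] : (0:ℝ) ≤ 4 * Real.sqrt s - 4 * Real.sqrt 1)] at hb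
  simp only [Real.sqrt_one] at hb
  nlinarith [Real.sqrt_nonneg s]

lemma F0_deriv {v : ℝ} (hv : 1 < v) : HasDerivAt F0 (Real.log v / (1 - v)) v := by
  apply intervalIntegral.integral_hasDerivAt_right (g0_intInt le_rfl hv.le)
    (g0_meas.stronglyMeasurable.stronglyMeasurableAtFilter)
  exact ContinuousAt.div (Real.continuousAt_log (by linarith))
    (continuousAt_const.sub continuousAt_id) (by simp; intro h; linarith)
lemma F0_comp_cont : Continuous (fun r : ℝ => F0 (1 + r ^ 2)) := by
  have hL : LipschitzOnWith 2 F0 (Set.Ici 1) := by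
    apply LipschitzOnWith.of_dist_le_mul
    intro x hx y hy
    rw [Real.dist_eq, Real.dist_eq]
    simpa using F0_sub_le hy hx
  have hs : Continuous (fun r : ℝ => 1 + r ^ 2) := by continuity
  exact hL.continuousOn.comp_continuous hs (fun r => by simp [Set.mem_Ici]; positivity)

/-- The radial profile as a function of `u = r²`. -/
noncomputable def W0 (u : ℝ) : ℝ :=
  -Real.log (1 + u) + 2 * u / (1 + u) - (1 / 2) * (Real.log (1 + u)) ^ 2
    + (1 - u) / (1 + u) * F0 (1 + u)

/-- derivative of `W0` -/
noncomputable def W1 (u : ℝ) : ℝ :=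
  -(1/(1+u)) + 2/(1+u)^2 - Real.log (1+u)/(1+u) - 2*F0 (1+u)/(1+u)^2
    - Real.log (1+u)*(1-u)/(u*(1+u))

lemma hasDerivAt_F0_comp {u : ℝ} (hu : 0 < u) :
    HasDerivAt (fun u : ℝ => F0 (1 + u)) (-Real.log (1 + u) / u) u := by
  have h1 : HasDerivAt (fun u : ℝ => 1 + u) 1 u := (hasDerivAt_id u).const_add 1
  have h2 := (F0_deriv (v := 1 + u) (by linarith)).comp u h1
  refine (h2).congr_deriv (Eq.symm ?_)
  rw [mul_one]
  rw [div_eq_div_iff (by positivity) (by intro h; nlinarith)]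
  ring

lemma W0_hasDerivAt {u : ℝ} (hu : 0 < u) : HasDerivAt W0 (W1 u) u := by
  have hs : (0:ℝ) < 1 + u := by linarith
  have hlog : HasDerivAt (fun u : ℝ => Real.log (1 + u)) (1/(1+u)) u := by
    have := (Real.hasDerivAt_log hs.ne').comp u ((hasDerivAt_id u).const_add 1)
    exact this.congr_deriv (by ring)
  have h1 : HasDerivAt (fun u : ℝ => -Real.log (1 + u)) (-(1/(1+u))) u := hlog.neg
  have h2 : HasDerivAt (fun u : ℝ => 2 * u / (1 + u)) (2/(1+u)^2) u := by
    have := ((hasDerivAt_id u).const_mul 2).div ((hasDerivAt_id u).const_add 1) hs.ne'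
    refine (this).congr_deriv (Eq.symm ?_)
    simp only [id]
    field_simp
    ring
  have h3 : HasDerivAt (fun u : ℝ => (1/2 : ℝ) * (Real.log (1 + u)) ^ 2)
      (Real.log (1+u)/(1+u)) u := by
    have := ((hlog.pow 2).const_mul (1/2 : ℝ))
    refine (this).congr_deriv (Eq.symm ?_)
    field_simp
    norm_num
    ring
  have h4 : HasDerivAt (fun u : ℝ => (1 - u) / (1 + u) * F0 (1 + u))
      (-2/(1+u)^2 * F0 (1+u) + (1-u)/(1+u) * (-Real.log (1+u)/u)) u := by
    have hq : HasDerivAt (fun u : ℝ => (1 - u) / (1 + u)) (-2/(1+u)^2) u := by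
      have := ((hasDerivAt_id u).const_sub 1).div ((hasDerivAt_id u).const_add 1) hs.ne'
      refine (this).congr_deriv (Eq.symm ?_)
      simp only [id]
      field_simp
      ring
    exact hq.mul (hasDerivAt_F0_comp hu)
  have := ((h1.add h2).sub h3).add h4
  refine (this).congr_deriv (Eq.symm ?_)
  unfold W1
  field_simp
  ring
lemma W1_diff {u : ℝ} (hu : 0 < u) : DifferentiableAt ℝ W1 u := by
  have hs : (0:ℝ) < 1 + u := by linarith
  have hlog : DifferentiableAt ℝ (fun u : ℝ => Real.log (1 + u)) u := by
    have : HasDerivAt (fun u : ℝ => Real.log (1 + u)) (1/(1+u)) u := by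
      have := (Real.hasDerivAt_log hs.ne').comp u ((hasDerivAt_id u).const_add 1)
      exact this.congr_deriv (by ring)
    exact this.differentiableAt
  have hF : DifferentiableAt ℝ (fun u : ℝ => F0 (1 + u)) u :=
    (hasDerivAt_F0_comp hu).differentiableAt
  have hden : DifferentiableAt ℝ (fun u : ℝ => 1 + u) u := (differentiableAt_id.const_add 1)
  have h1u : (fun u : ℝ => 1 + u) u ≠ 0 := by simp; nlinarith
  unfold W1
  apply DifferentiableAt.sub
  apply DifferentiableAt.sub
  apply DifferentiableAt.sub
  apply DifferentiableAt.add
  · exact (differentiableAt_const _ |>.div hden h1u).neg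
  · exact (differentiableAt_const _).div (hden.pow 2) (by positivity)
  · exact hlog.div hden h1u
  · exact ((hF.const_mul 2)).div (hden.pow 2) (by positivity)
  · exact (hlog.mul (differentiableAt_const _  |>.sub differentiableAt_id)).div
      (differentiableAt_id.mul hden) (by simp; constructor <;> nlinarith)

/-- `G r = r * w'(r)` -/
noncomputable def Gf (r : ℝ) : ℝ :=
  -2*r^2/(1+r^2) + 4*r^2/(1+r^2)^2 - 2*Real.log (1+r^2)/(1+r^2)
    - 4*r^2*F0 (1+r^2)/(1+r^2)^2

/-- `H = G'` -/
noncomputable def Hf (r : ℝ) : ℝ :=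
  -16*r/(1+r^2)^2 + 16*r/(1+r^2)^3 + 12*r*Real.log (1+r^2)/(1+r^2)^2
    - 8*r*F0 (1+r^2)/(1+r^2)^2 + 16*r^3*F0 (1+r^2)/(1+r^2)^3

lemma Gf_eq {r : ℝ} (hr : r ≠ 0) : Gf r = 2*r^2 * W1 (r^2) := by
  have hs : (0:ℝ) < 1 + r^2 := by positivity
  unfold Gf W1
  field_simp
  ring

lemma Gf_zero : Gf 0 = 0 := by simp [Gf, F0_one]

lemma Gf_hasDerivAt {r : ℝ} (hr : 0 < r) : HasDerivAt Gf (Hf r) r := by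
  have hs : (0:ℝ) < 1 + r^2 := by positivity
  have hsq : HasDerivAt (fun r : ℝ => 1 + r^2) (2*r) r := by
    have := ((hasDerivAt_pow 2 r)).const_add 1
    simpa using this
  have hlog : HasDerivAt (fun r : ℝ => Real.log (1 + r^2)) (2*r/(1+r^2)) r := by
    have := (Real.hasDerivAt_log hs.ne').comp r hsq
    refine (this).congr_deriv (Eq.symm ?_)
    field_simp
  have hF : HasDerivAt (fun r : ℝ => F0 (1 + r^2)) (-2*Real.log (1+r^2)/r) r := by
    have := (F0_deriv (v := 1 + r^2) (by nlinarith)).comp r hsq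
    refine (this).congr_deriv (Eq.symm ?_)
    rw [div_eq_iff hr.ne']
    have : 1 - (1 + r^2) = -r^2 := by ring
    rw [this]
    field_simp
  have h1 : HasDerivAt (fun r : ℝ => -2*r^2/(1+r^2)) (-4*r/(1+r^2)^2) r := by
    have := ((hasDerivAt_pow 2 r).const_mul (-2 : ℝ)).div hsq hs.ne'
    refine (this).congr_deriv (Eq.symm ?_)
    field_simp
    ring
  have h2 : HasDerivAt (fun r : ℝ => 4*r^2/(1+r^2)^2) (8*r/(1+r^2)^2 - 16*r^3/(1+r^2)^3) r := by
    have := ((hasDerivAt_pow 2 r).const_mul (4 : ℝ)).div (hsq.pow 2) (by positivity : ((1 + r^2)^2 : ℝ) ≠ 0)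
    refine (this).congr_deriv (Eq.symm ?_)
    simp only [Pi.pow_apply]
    field_simp
    ring
  have h3 : HasDerivAt (fun r : ℝ => 2*Real.log (1+r^2)/(1+r^2))
      ((4*r - 4*r*Real.log (1+r^2))/(1+r^2)^2) r := by
    have := (hlog.const_mul (2:ℝ)).div hsq hs.ne'
    refine (this).congr_deriv (Eq.symm ?_)
    field_simp
    ring
  have h4 : HasDerivAt (fun r : ℝ => 4*r^2*F0 (1+r^2)/(1+r^2)^2)
      ((8*r*F0 (1+r^2) - 8*r*Real.log (1+r^2))/(1+r^2)^2 - 16*r^3*F0 (1+r^2)/(1+r^2)^3) r := by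
    have hnum : HasDerivAt (fun r : ℝ => 4*r^2*F0 (1+r^2))
        (8*r*F0 (1+r^2) + 4*r^2*(-2*Real.log (1+r^2)/r)) r := by
      have := ((hasDerivAt_pow 2 r).const_mul (4 : ℝ)).mul hF
      refine (this).congr_deriv (Eq.symm ?_)
      ring
    have := hnum.div (hsq.pow 2) (by positivity : ((1 + r^2)^2 : ℝ) ≠ 0)
    refine (this).congr_deriv (Eq.symm ?_)
    simp only [Pi.pow_apply]
    field_simp
    ring
  have := ((h1.add h2).sub h3).sub h4
  refine (this).congr_deriv (Eq.symm ?_)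
  unfold Hf
  field_simp
  ring
lemma cont_sq : Continuous (fun r : ℝ => 1 + r ^ 2) := by continuity

lemma sq_ne {r : ℝ} : (1 + r ^ 2) ≠ 0 := by positivity

lemma cont_log_sq : Continuous (fun r : ℝ => Real.log (1 + r ^ 2)) :=
  cont_sq.log (fun r => sq_ne)

lemma Gf_cont : Continuous Gf := by
  unfold Gf
  refine ((((Continuous.div ?_ cont_sq fun r => sq_ne).add
    (Continuous.div ?_ (cont_sq.pow 2) fun r => pow_ne_zero _ sq_ne)).sub
    (Continuous.div ?_ cont_sq fun r => sq_ne)).sub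
    (Continuous.div ?_ (cont_sq.pow 2) fun r => by positivity))
  · continuity
  · continuity
  · exact continuous_const.mul cont_log_sq
  · exact (continuous_const.mul (continuous_pow 2)).mul F0_comp_cont

lemma Hf_cont : Continuous Hf := by
  unfold Hf
  refine ((((Continuous.div ?_ (cont_sq.pow 2) fun r => pow_ne_zero _ sq_ne).add
    (Continuous.div ?_ (cont_sq.pow 3) fun r => pow_ne_zero _ sq_ne)).add
    (Continuous.div ?_ (cont_sq.pow 2) fun r => pow_ne_zero _ sq_ne)).sub
    (Continuous.div ?_ (cont_sq.pow 2) fun r => pow_ne_zero _ sq_ne)).add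
    (Continuous.div ?_ (cont_sq.pow 3) fun r => pow_ne_zero _ sq_ne)
  · continuity
  · continuity
  · exact (continuous_const.mul continuous_id).mul cont_log_sq
  · exact (continuous_const.mul continuous_id).mul F0_comp_cont
  · exact (continuous_const.mul (continuous_pow 3)).mul F0_comp_cont


lemma log_le_two_sqrt {t : ℝ} (h : 1 ≤ t) : Real.log t ≤ 2 * Real.sqrt t := by
  have h0 : (0:ℝ) < t := by linarith
  have := Real.log_le_sub_one_of_pos (show 0 < Real.sqrt t by positivity)
  have hls : Real.log (Real.sqrt t) = Real.log t / 2 := Real.log_sqrt h0.le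
  nlinarith [Real.sqrt_nonneg t]

lemma Gf_bound {r : ℝ} (hr : 1 ≤ r) : |Gf r + 2| ≤ 26 / r := by
  have hr0 : (0:ℝ) < r := by linarith
  set s : ℝ := 1 + r ^ 2 with hs_def
  have hs1 : (1:ℝ) ≤ s := by nlinarith
  have hs0 : (0:ℝ) < s := by linarith
  set σ : ℝ := Real.sqrt s with hσ_def
  have hσsq : σ * σ = s := Real.mul_self_sqrt hs0.le
  have hσ1 : (1:ℝ) ≤ σ := by nlinarith [Real.sqrt_nonneg s]
  have hrσ : r ≤ σ := by nlinarith [Real.sqrt_nonneg s]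
  set L : ℝ := Real.log s with hL_def
  set F : ℝ := F0 s with hF_def
  have hL0 : 0 ≤ L := Real.log_nonneg hs1
  have hL2 : L ≤ 2 * σ := log_le_two_sqrt hs1
  have hFb : |F| ≤ 4 * σ := F0_abs_le hs1
  obtain ⟨hF1, hF2⟩ := abs_le.mp hFb
  have hrw : Gf r + 2 = (2*s + 4*r^2 - 2*L*s - 4*r^2*F) / s^2 := by
    unfold Gf
    rw [← hs_def, ← hL_def, ← hF_def]
    field_simp
    ring
  rw [hrw, abs_div, abs_of_pos (by positivity : (0:ℝ) < s^2)]
  have hnum : |2*s + 4*r^2 - 2*L*s - 4*r^2*F| ≤ 26 * (s * σ) := by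
    rw [abs_le]
    constructor <;> nlinarith [sq_nonneg r, mul_nonneg hL0 hs0.le,
      mul_le_mul_of_nonneg_left hF2 (by positivity : (0:ℝ) ≤ 4*r^2),
      mul_le_mul_of_nonneg_left hF1 (by positivity : (0:ℝ) ≤ 4*r^2),
      mul_le_mul_of_nonneg_right hL2 hs0.le, mul_nonneg (mul_nonneg hL0 hs0.le) (by linarith : (0:ℝ) ≤ σ - 1)]
  calc |2*s + 4*r^2 - 2*L*s - 4*r^2*F| / s^2 ≤ 26 * (s * σ) / s^2 := by gcongr
  _ = 26 / σ := by
    rw [div_eq_div_iff (by positivity) (by positivity)]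
    nlinarith [hσsq]
  _ ≤ 26 / r := by gcongr
lemma Gf_tendsto : Tendsto Gf atTop (nhds (-2)) := by
  have h0 : Tendsto (fun r : ℝ => Gf r - (-2)) atTop (nhds 0) := by
    refine squeeze_zero_norm' (a := fun r : ℝ => 26 / r) ?_
      (tendsto_const_nhds.div_atTop tendsto_id)
    filter_upwards [eventually_ge_atTop (1:ℝ)] with r hr
    simpa [Real.norm_eq_abs, sub_neg_eq_add] using Gf_bound hr
  have := h0.add (tendsto_const_nhds (x := (-2:ℝ)))
  simpa using this

lemma Hf_bound {r : ℝ} (hr : 1 ≤ r) : |Hf r| ≤ 152 / r ^ 2 := by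
  have hr0 : (0:ℝ) < r := by linarith
  set s : ℝ := 1 + r ^ 2 with hs_def
  have hs1 : (1:ℝ) ≤ s := by nlinarith
  have hs0 : (0:ℝ) < s := by linarith
  set σ : ℝ := Real.sqrt s with hσ_def
  have hσsq : σ * σ = s := Real.mul_self_sqrt hs0.le
  have hσ1 : (1:ℝ) ≤ σ := by nlinarith [Real.sqrt_nonneg s]
  have hrσ : r ≤ σ := by nlinarith [Real.sqrt_nonneg s]
  set L : ℝ := Real.log s with hL_def
  set F : ℝ := F0 s with hF_def
  have hL0 : 0 ≤ L := Real.log_nonneg hs1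
  have hL2 : L ≤ 2 * σ := log_le_two_sqrt hs1
  obtain ⟨hF1, hF2⟩ := abs_le.mp (F0_abs_le hs1 : |F| ≤ 4 * σ)
  have hrw : Hf r = (-16*r*s + 16*r + 12*r*L*s - 8*r*F*s + 16*r^3*F) / s^3 := by
    unfold Hf
    rw [← hs_def, ← hL_def, ← hF_def]
    field_simp
  rw [hrw, abs_div, abs_of_pos (by positivity : (0:ℝ) < s^3)]
  have hr2s : r^2 ≤ s := by nlinarith
  have hA : 0 ≤ r*s*(2*σ - L) := mul_nonneg (mul_nonneg hr0.le hs0.le) (by linarith)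
  have hB : 0 ≤ r*s*(4*σ - F) := mul_nonneg (mul_nonneg hr0.le hs0.le) (by linarith)
  have hC : 0 ≤ r*s*(4*σ + F) := mul_nonneg (mul_nonneg hr0.le hs0.le) (by linarith)
  have hD : 0 ≤ r*σ*(s - r^2) := mul_nonneg (mul_nonneg hr0.le (by linarith)) (by linarith)
  have hE : 0 ≤ r^3*(4*σ - F) := mul_nonneg (by positivity) (by linarith)
  have hG2 : 0 ≤ r^3*(4*σ + F) := mul_nonneg (by positivity) (by linarith)
  have hI : 0 ≤ r*(σ*s - 1) := mul_nonneg hr0.le (by nlinarith)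
  have hJ : 0 ≤ r*L*s := mul_nonneg (mul_nonneg hr0.le hL0) hs0.le
  have hK : 0 ≤ r*s*(σ - 1) := mul_nonneg (mul_nonneg hr0.le hs0.le) (by linarith)
  have hrs : 0 ≤ r*s := mul_nonneg hr0.le hs0.le
  have hrσs : 0 ≤ r*σ*s := mul_nonneg (mul_nonneg hr0.le (by linarith)) hs0.le
  have hnum : |-16*r*s + 16*r + 12*r*L*s - 8*r*F*s + 16*r^3*F| ≤ 152 * (r * σ * s) := by
    rw [abs_le]
    constructor <;> linarith [hA, hB, hC, hD, hE, hG2, hI, hJ, hK, hrs, hrσs]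
  calc |-16*r*s + 16*r + 12*r*L*s - 8*r*F*s + 16*r^3*F| / s^3 ≤ 152 * (r*σ*s) / s^3 := by gcongr
  _ ≤ 152 / r^2 := by
    have hcube : r^3*σ ≤ s^2 := by
      have h3 : r^3 ≤ σ^3 := pow_le_pow_left₀ hr0.le hrσ 3
      nlinarith
    rw [div_le_div_iff₀ (by positivity) (by positivity)]
    nlinarith [mul_le_mul_of_nonneg_right hcube hs0.le]
lemma Hf_integrable : IntegrableOn Hf (Set.Ioi (0:ℝ)) := by
  have hsplit : Set.Ioi (0:ℝ) = Set.Ioc (0:ℝ) 1 ∪ Set.Ioi 1 := (Set.Ioc_union_Ioi_eq_Ioi zero_le_one).symm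
  rw [hsplit]
  apply IntegrableOn.union
  · exact Hf_cont.integrableOn_Ioc
  · apply Integrable.mono' (g := fun r : ℝ => 152 * r ^ (-2 : ℝ))
    · exact (integrableOn_Ioi_rpow_of_lt (by norm_num) one_pos).const_mul 152
    · exact Hf_cont.aestronglyMeasurable.restrict
    · filter_upwards [ae_restrict_mem measurableSet_Ioi] with r hr
      have hr1 : (1:ℝ) ≤ r := le_of_lt hr
      have hr0 : (0:ℝ) < r := by linarith
      rw [Real.norm_eq_abs, Real.rpow_neg hr0.le]
      have : r ^ (2:ℝ) = r ^ (2:ℕ) := by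
        rw [← Real.rpow_natCast]
        norm_num
      rw [this]
      calc |Hf r| ≤ 152 / r^2 := Hf_bound hr1
      _ = 152 * (r ^ (2:ℕ))⁻¹ := by rw [div_eq_mul_inv]

lemma Hf_integral : ∫ r in Set.Ioi (0:ℝ), Hf r = -2 := by
  have := MeasureTheory.integral_Ioi_of_hasDerivAt_of_tendsto
    (f := Gf) (f' := Hf) (a := 0) (m := -2)
    (Gf_cont.continuousWithinAt)
    (fun x hx => Gf_hasDerivAt hx)
    Hf_integrable Gf_tendsto
  rw [this, Gf_zero]
  norm_num

/-- The Laplacian of a function on `ℝ²`. -/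
noncomputable def laplacian (f : EuclideanSpace ℝ (Fin 2) → ℝ)
    (x : EuclideanSpace ℝ (Fin 2)) : ℝ :=
  ∑ i : Fin 2,
    fderiv ℝ (fun y => fderiv ℝ f y (EuclideanSpace.single i 1)) x (EuclideanSpace.single i 1)

lemma norm_sq_sum (x : EuclideanSpace ℝ (Fin 2)) : ‖x‖^2 = ∑ i : Fin 2, (x i)^2 := by
  rw [EuclideanSpace.norm_eq, Real.sq_sqrt (by positivity)]
  simp [sq_abs]

lemma lap_eq (x : EuclideanSpace ℝ (Fin 2)) (hx : x ≠ 0) :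
    laplacian (fun y => W0 (‖y‖^2)) x
      = 4 * ‖x‖^2 * deriv W1 (‖x‖^2) + 4 * W1 (‖x‖^2) := by
  have hx0 : 0 < ‖x‖ := norm_pos_iff.mpr hx
  have hu : 0 < ‖x‖^2 := by positivity
  have hfd : ∀ y : EuclideanSpace ℝ (Fin 2), y ≠ 0 →
      HasFDerivAt (fun y : EuclideanSpace ℝ (Fin 2) => W0 (‖y‖^2))
        (W1 (‖y‖^2) • (2 • (innerSL ℝ y))) y := by
    intro y hy
    have hy0 : 0 < ‖y‖ := norm_pos_iff.mpr hy
    exact (W0_hasDerivAt (by positivity)).comp_hasFDerivAt y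
      (hasStrictFDerivAt_norm_sq y).hasFDerivAt
  have hterm : ∀ i : Fin 2,
      fderiv ℝ (fun y => fderiv ℝ (fun y : EuclideanSpace ℝ (Fin 2) => W0 (‖y‖^2)) y
          (EuclideanSpace.single i 1)) x (EuclideanSpace.single i 1)
        = 4 * (x i)^2 * deriv W1 (‖x‖^2) + 2 * W1 (‖x‖^2) := by
    intro i
    have hev : (fun y => fderiv ℝ (fun y : EuclideanSpace ℝ (Fin 2) => W0 (‖y‖^2)) y
          (EuclideanSpace.single i 1))
        =ᶠ[nhds x] (fun y => W1 (‖y‖^2) * (2 * y i)) := by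
      filter_upwards [isOpen_compl_singleton.mem_nhds hx] with y hy
      rw [(hfd y hy).fderiv]
      fin_cases i <;> simp [EuclideanSpace.inner_single_right] <;> ring
    rw [hev.fderiv_eq]
    have hq : HasFDerivAt (fun y : EuclideanSpace ℝ (Fin 2) => ‖y‖^2) (2 • (innerSL ℝ x)) x :=
      (hasStrictFDerivAt_norm_sq x).hasFDerivAt
    have hW1c : HasFDerivAt (fun y : EuclideanSpace ℝ (Fin 2) => W1 (‖y‖^2))
        (deriv W1 (‖x‖^2) • (2 • (innerSL ℝ x))) x :=
      by exact ((W1_diff hu).hasDerivAt).comp_hasFDerivAt x hq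
    have hproj : HasFDerivAt (fun y : EuclideanSpace ℝ (Fin 2) => 2 * y i)
        ((2:ℝ) • (EuclideanSpace.proj i : EuclideanSpace ℝ (Fin 2) →L[ℝ] ℝ)) x :=
      ((EuclideanSpace.proj i : EuclideanSpace ℝ (Fin 2) →L[ℝ] ℝ).hasFDerivAt).const_mul 2
    have hmul : HasFDerivAt (fun y : EuclideanSpace ℝ (Fin 2) => W1 (‖y‖^2) * (2 * y i)) _ x := hW1c.mul hproj
    rw [hmul.fderiv]
    fin_cases i <;>
      simp [EuclideanSpace.inner_single_right, EuclideanSpace.single_apply] <;> ring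
  unfold laplacian
  rw [Finset.sum_congr rfl (fun i _ => hterm i), norm_sq_sum x, Fin.sum_univ_two,
    Fin.sum_univ_two]
  ring

lemma Hf_eq_rad {r : ℝ} (hr : 0 < r) :
    Hf r = r * (4 * r^2 * deriv W1 (r^2) + 4 * W1 (r^2)) := by
  have hu : (0:ℝ) < r^2 := by positivity
  have hsq : HasDerivAt (fun ρ : ℝ => ρ^2) (2*r) r := by
    simpa using hasDerivAt_pow 2 r
  have h2 : HasDerivAt (fun ρ : ℝ => 2*ρ^2 * W1 (ρ^2))
      (4*r*W1 (r^2) + 2*r^2*(deriv W1 (r^2) * (2*r))) r := by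
    have hp : HasDerivAt (fun ρ : ℝ => 2*ρ^2) (4*r) r := by
      have := hsq.const_mul (2:ℝ)
      refine (this).congr_deriv (Eq.symm ?_)
      ring
    have hW1' : HasDerivAt W1 (deriv W1 (r^2)) ((fun ρ : ℝ => ρ^2) r) := (W1_diff hu).hasDerivAt
    have hc := HasDerivAt.comp (h₂ := W1) (h := fun ρ : ℝ => ρ^2) r hW1' hsq
    have := hp.mul hc
    refine (this).congr_deriv (Eq.symm ?_)
    rfl
  have heq : Gf =ᶠ[nhds r] fun ρ : ℝ => 2*ρ^2 * W1 (ρ^2) := by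
    filter_upwards [isOpen_ne.mem_nhds hr.ne'] with ρ hρ
    exact Gf_eq hρ
  have hd : HasDerivAt Gf (4*r*W1 (r^2) + 2*r^2*(deriv W1 (r^2) * (2*r))) r :=
    h2.congr_of_eventuallyEq heq
  have := (Gf_hasDerivAt hr).unique hd
  rw [this]
  ring
/-- For the explicit radial function `w`, `lim_{r→∞} 2πr w'(r) = -4π`; equivalently
`∫_{ℝ²} Δw dx = -4π`. -/
theorem stmt5 (w : ℝ → ℝ)
    (hw : ∀ r, w r = -Real.log (1 + r ^ 2) + 2 * r ^ 2 / (1 + r ^ 2)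
        - (1 / 2) * (Real.log (1 + r ^ 2)) ^ 2
        + (1 - r ^ 2) / (1 + r ^ 2) * ∫ t in (1 : ℝ)..(1 + r ^ 2), Real.log t / (1 - t)) :
    Tendsto (fun r => 2 * π * r * deriv w r) atTop (nhds (-(4 * π))) ∧
    (∫ x : EuclideanSpace ℝ (Fin 2), laplacian (fun y => w ‖y‖) x) = -(4 * π) := by
  have hwfun : w = fun r => W0 (r ^ 2) := by
    funext r
    rw [hw]
    simp only [W0, F0]
  constructor
  · have hev : (fun r => 2 * π * r * deriv w r) =ᶠ[atTop] fun r => 2 * π * Gf r := by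
      filter_upwards [eventually_gt_atTop (0:ℝ)] with r hr
      have hu : (0:ℝ) < r^2 := by positivity
      have hd : HasDerivAt w (W1 (r^2) * (2*r)) r := by
        rw [hwfun]
        have hW' : HasDerivAt W0 (W1 (r^2)) ((fun ρ : ℝ => ρ^2) r) := W0_hasDerivAt hu
        exact HasDerivAt.comp (h₂ := W0) (h := fun ρ : ℝ => ρ^2) r hW'
          (by simpa using hasDerivAt_pow 2 r)
      rw [hd.deriv, Gf_eq hr.ne']
      ring
    have ht := Gf_tendsto.const_mul (2*π)
    rw [show (2*π)*(-2 : ℝ) = -(4*π) by ring] at ht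
    exact ht.congr' hev.symm
  · have hfeq : (fun y : EuclideanSpace ℝ (Fin 2) => w ‖y‖)
        = fun y : EuclideanSpace ℝ (Fin 2) => W0 (‖y‖^2) := by
      funext y
      rw [hwfun]
    rw [hfeq]
    have hne : ∀ᵐ x : EuclideanSpace ℝ (Fin 2), x ≠ 0 := by
      rw [MeasureTheory.ae_iff]
      simpa [Set.setOf_eq_eq_singleton] using
        measure_singleton (0 : EuclideanSpace ℝ (Fin 2))
    have hae : (fun x : EuclideanSpace ℝ (Fin 2) => laplacian (fun y => W0 (‖y‖^2)) x)
        =ᵐ[volume] fun x => (fun ρ => Hf ρ / ρ) ‖x‖ := by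
      filter_upwards [hne] with x hx
      have hx0 : 0 < ‖x‖ := norm_pos_iff.mpr hx
      rw [lap_eq x hx]
      rw [Hf_eq_rad hx0]
      field_simp
    rw [integral_congr_ae hae]
    rw [MeasureTheory.integral_fun_norm_addHaar volume (fun ρ => Hf ρ / ρ)]
    have hdim : Module.finrank ℝ (EuclideanSpace ℝ (Fin 2)) = 2 := finrank_euclideanSpace_fin
    rw [hdim]
    have hball : (volume (Metric.ball (0 : EuclideanSpace ℝ (Fin 2)) 1)).toReal = π := by
      rw [EuclideanSpace.volume_ball]
      norm_num [Real.Gamma_two, Real.sq_sqrt Real.pi_nonneg,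
        ENNReal.toReal_ofReal Real.pi_nonneg]
    rw [measureReal_def, hball]
    have hI : ∫ y in Set.Ioi (0:ℝ), y ^ (2-1) • (Hf y / y) = -2 := by
      rw [← Hf_integral]
      apply MeasureTheory.setIntegral_congr_fun measurableSet_Ioi
      intro y hy
      have hy0 : (y:ℝ) ≠ 0 := ne_of_gt hy
      simp [smul_eq_mul]
      field_simp
    rw [hI]
    simp [smul_eq_mul]
    ring
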